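/- Let (X, Y, ⟨·,·⟩) be a dual pairing, h : X → ℝ̄, and for n ≥ 1 define h^{n∪}(x) := sup{⟨x-x₁,y₁⟩ + ⟨x₁-x₂,y₂⟩ + … + ⟨xₙ₋₁-xₙ,yₙ⟩ + h(xₙ) : (xᵢ,yᵢ) ∈ Graph(∂h) for i=1..n}. Then h^{n∪} = h^{1∪} for every n ≥ 1. -/

import Mathlib

variable {X Y : Type*} [AddCommGroup X] [Module ℝ X] [AddCommGroup Y] [Module ℝ Y]

/-- `y` is a subgradient of `h : X → ℝ̄` at `x`. -/
def IsSubgrad (b : X →ₗ[ℝ] Y →ₗ[ℝ] ℝ) (h : X → EReal) (x : X) (y : Y) : Prop :=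
  ∃ s : ℝ, h x = (s : EReal) ∧ ∀ w : X, ((b (w - x) y : ℝ) : EReal) + (s : EReal) ≤ h w

/-- `h^{n∪}(x) = sup{⟨x-x₁,y₁⟩ + ⟨x₁-x₂,y₂⟩ + … + ⟨xₙ₋₁-xₙ,yₙ⟩ + h(xₙ) :
(xᵢ,yᵢ) ∈ Graph ∂h}`. -/
noncomputable def hcupN (b : X →ₗ[ℝ] Y →ₗ[ℝ] ℝ) (h : X → EReal) (n : ℕ)
    (x : X) : EReal :=
  sSup {r : EReal | ∃ c : ℕ → X × Y,
    (∀ i ∈ Finset.Icc 1 n, IsSubgrad b h (c i).1 (c i).2) ∧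
    r = ((b (x - (c 1).1) (c 1).2
        + ∑ i ∈ Finset.Icc 2 n, b ((c (i - 1)).1 - (c i).1) (c i).2 : ℝ) : EReal)
        + h (c n).1}

lemma key_ineq (b : X →ₗ[ℝ] Y →ₗ[ℝ] ℝ) (h : X → EReal) (c : ℕ → X × Y)
    (n : ℕ) (hn : 1 ≤ n) (hsub : ∀ i ∈ Finset.Icc 1 n, IsSubgrad b h (c i).1 (c i).2) :
    ((∑ i ∈ Finset.Icc 2 n, b ((c (i - 1)).1 - (c i).1) (c i).2 : ℝ) : EReal)
      + h (c n).1 ≤ h (c 1).1 := by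
  induction n, hn using Nat.le_induction with
  | base => simp
  | succ n hn ih =>
    have ih' := ih (fun i hi => hsub i (Finset.Icc_subset_Icc_right (by omega) hi))
    obtain ⟨s, hse, hsw⟩ := hsub (n+1) (by simp [Finset.mem_Icc])
    have hstep : ((b ((c n).1 - (c (n+1)).1) (c (n+1)).2 : ℝ) : EReal)
        + h (c (n+1)).1 ≤ h (c n).1 := by
      rw [hse]; exact hsw (c n).1
    rw [Finset.sum_Icc_succ_top (by omega)]
    have hn1 : (n + 1) - 1 = n := by omega
    rw [hn1]
    push_cast
    rw [add_assoc]
    calc ((∑ i ∈ Finset.Icc 2 n, b ((c (i - 1)).1 - (c i).1) (c i).2 : ℝ) : EReal)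
        + (((b ((c n).1 - (c (n+1)).1) (c (n+1)).2 : ℝ) : EReal) + h (c (n+1)).1)
        ≤ ((∑ i ∈ Finset.Icc 2 n, b ((c (i - 1)).1 - (c i).1) (c i).2 : ℝ) : EReal)
          + h (c n).1 := add_le_add_right hstep _
      _ ≤ h (c 1).1 := ih'

/-- `h^{n∪} = h^{1∪}` for every `n ≥ 1`. -/
theorem hcupN_eq_hcupOne (b : X →ₗ[ℝ] Y →ₗ[ℝ] ℝ) (h : X → EReal) (n : ℕ)
    (hn : 1 ≤ n) (x : X) :
    hcupN b h n x = hcupN b h 1 x := by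
  apply le_antisymm
  · apply sSup_le
    rintro r ⟨c, hc, rfl⟩
    have hmem : ((b (x - (c 1).1) (c 1).2
        + ∑ i ∈ Finset.Icc 2 1, b ((c (i - 1)).1 - (c i).1) (c i).2 : ℝ) : EReal)
        + h (c 1).1 ∈ {r : EReal | ∃ c' : ℕ → X × Y,
          (∀ i ∈ Finset.Icc 1 1, IsSubgrad b h (c' i).1 (c' i).2) ∧
          r = ((b (x - (c' 1).1) (c' 1).2
            + ∑ i ∈ Finset.Icc 2 1, b ((c' (i - 1)).1 - (c' i).1) (c' i).2 : ℝ) : EReal)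
            + h (c' 1).1} :=
      ⟨c, fun i hi => hc i (Finset.Icc_subset_Icc_right hn hi), rfl⟩
    refine le_trans ?_ (le_sSup hmem)
    push_cast
    simp only [Finset.Icc_self, Finset.Icc_eq_empty_of_lt (by norm_num : (2:ℕ) > 1),
      Finset.sum_empty]
    rw [add_assoc]
    calc ((b (x - (c 1).1) (c 1).2 : ℝ) : EReal)
        + (((∑ i ∈ Finset.Icc 2 n, b ((c (i - 1)).1 - (c i).1) (c i).2 : ℝ) : EReal)
          + h (c n).1)
        ≤ ((b (x - (c 1).1) (c 1).2 : ℝ) : EReal) + h (c 1).1 :=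
          add_le_add_right (key_ineq b h c n hn hc) _
      _ = _ := by norm_num
  · apply sSup_le
    rintro r ⟨c, hc, rfl⟩
    apply le_sSup
    refine ⟨fun _ => c 1, fun i hi => hc 1 (by simp), ?_⟩
    simp
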